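/- Let $H$ be a finite class of unilabel predictors, $S$ a finite training set, $\delta\geq 0$, $\gamma>0$. Suppose for every probability distribution $D$ over $S$ there exists $h\in H$ with $\mathrm{err}^{\mathrm{ova}}_\delta(h,D) = \mathbb{E}_{(x,y)\sim D}[2\,\mathbb{1}[\exists z\in B_p(\delta):h(x+z)\neq y]-1] \leq -\gamma$. Then there exists a probability distribution $Q$ over $H$ such that for all $(x,y)\in S$ and all $z\in B_p(\delta)$, $\Pr_{h\sim Q}[h(x+z)=y]\geq\frac{1+\gamma}{2}$. -/

import Mathlib

open scoped Classical

/-- Finite minimax-type lemma via Hahn–Banach separation. -/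
theorem minimax_aux (m : ℕ) (ι : Type) [Fintype ι] [Nonempty ι]
    (A : Fin m → ι → ℝ) (hA0 : ∀ i j, 0 ≤ A i j)
    (c : ℝ) (hc : 0 < c)
    (hyp : ∀ D : Fin m → ℝ, (∀ i, 0 ≤ D i) → (∑ i, D i = 1) →
      ∃ j : ι, c ≤ ∑ i, D i * A i j) :
    ∃ Q : ι → ℝ, (∀ j, 0 ≤ Q j) ∧ (∑ j, Q j = 1) ∧
      ∀ i : Fin m, c ≤ ∑ j, Q j * A i j := by
  set f : ι → (Fin m → ℝ) := fun j i => A i j with hf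
  set s : Set (Fin m → ℝ) := convexHull ℝ (Set.range f) with hs
  set t : Set (Fin m → ℝ) := {v | ∀ i, c ≤ v i} with ht
  -- main claim: s and t intersect
  have hst : ∃ v₀ ∈ s, v₀ ∈ t := by
    by_contra hcon
    push_neg at hcon
    have hdisj : Disjoint s t := Set.disjoint_left.mpr fun v hv hvt => hcon v hv hvt
    have hcomp : IsCompact s := (Set.finite_range f).isCompact_convexHull (𝕜 := ℝ)
    have hconv : Convex ℝ s := convex_convexHull ℝ _
    have htconv : Convex ℝ t := by
      intro a ha b hb pp qq hpp hqq hpq i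
      have h1 := ha i
      have h2 := hb i
      have h3 : c * pp + c * qq ≤ pp * a i + qq * b i := by nlinarith
      calc c = c * pp + c * qq := by rw [← mul_add, hpq, mul_one]
        _ ≤ pp * a i + qq * b i := h3
        _ = (pp • a + qq • b) i := by simp [mul_comm]
    have htclosed : IsClosed t := by
      have : t = ⋂ i, (fun v : Fin m → ℝ => v i) ⁻¹' (Set.Ici c) := by
        ext v; simp [ht, Set.mem_iInter]
      rw [this]
      exact isClosed_iInter fun i => IsClosed.preimage (continuous_apply i) isClosed_Ici
    obtain ⟨g, u, v, hgu, huv, hgv⟩ :=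
      geometric_hahn_banach_compact_closed hconv hcomp htconv htclosed hdisj
    set lam : Fin m → ℝ := fun i => g (fun j => if i = j then (1:ℝ) else 0) with hlam
    have hg_eq : ∀ w : Fin m → ℝ, g w = ∑ i, w i * lam i := by
      intro w
      conv_lhs => rw [pi_eq_sum_univ w]
      rw [map_sum]
      exact Finset.sum_congr rfl fun i _ => by rw [map_smul]; simp [hlam, smul_eq_mul]
    set S : ℝ := ∑ i, lam i with hS
    -- λ is nonnegative
    have hlam_nonneg : ∀ i, 0 ≤ lam i := by
      intro i0
      by_contra hneg
      push_neg at hneg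
      set b : ℕ → (Fin m → ℝ) := fun n i => if i = i0 then c + n else c with hb
      have hmem : ∀ n : ℕ, b n ∈ t := by
        intro n i
        by_cases hii : i = i0
        · have : (0:ℝ) ≤ n := Nat.cast_nonneg n
          simp only [hb, hii, if_pos rfl]
          linarith
        · simp [hb, hii]
      have hgn : ∀ n : ℕ, g (b n) = c * S + (n : ℝ) * lam i0 := by
        intro n
        rw [hg_eq]
        have hterm : ∀ i, b n i * lam i
            = c * lam i + (if i = i0 then (n : ℝ) * lam i else 0) := by
          intro i
          by_cases hii : i = i0 <;> simp [hb, hii] <;> ring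
        rw [Finset.sum_congr rfl fun i _ => hterm i, Finset.sum_add_distrib,
          Finset.sum_ite_eq' Finset.univ i0 (fun i => (n : ℝ) * lam i)]
        simp [hS, Finset.mul_sum]
      obtain ⟨n, hn⟩ := exists_nat_gt ((c * S - v) / (-lam i0))
      have h1 : c * S - v < (n : ℝ) * (-lam i0) :=
        (div_lt_iff₀ (by linarith)).mp hn
      have h2 := hgv _ (hmem n)
      rw [hgn n] at h2
      nlinarith
    have hconstc : (fun _ : Fin m => c) ∈ t := fun i => le_refl c
    have hgc : g (fun _ => c) = c * S := by rw [hg_eq, hS, Finset.mul_sum]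
    have hvS : v < c * S := by have := hgv _ hconstc; rwa [hgc] at this
    have hj_eq : ∀ j : ι, g (f j) = ∑ i, A i j * lam i := fun j => hg_eq (f j)
    obtain ⟨j0⟩ := ‹Nonempty ι›
    have hfj0 : 0 ≤ g (f j0) := by
      rw [hj_eq]
      exact Finset.sum_nonneg fun i _ => mul_nonneg (hA0 i j0) (hlam_nonneg i)
    have hfj0u : g (f j0) < u := hgu _ (subset_convexHull ℝ _ ⟨j0, rfl⟩)
    have hSpos : 0 < S := by nlinarith
    obtain ⟨j, hj⟩ := hyp (fun i => lam i / S)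
      (fun i => div_nonneg (hlam_nonneg i) hSpos.le)
      (by rw [← Finset.sum_div, ← hS, div_self hSpos.ne'])
    have hsum : ∑ i, lam i / S * A i j = g (f j) / S := by
      rw [hj_eq, Finset.sum_div]
      exact Finset.sum_congr rfl fun i _ => by ring
    rw [hsum, le_div_iff₀ hSpos] at hj
    have hju : g (f j) < u := hgu _ (subset_convexHull ℝ _ ⟨j, rfl⟩)
    linarith
  obtain ⟨v₀, hv₀s, hv₀t⟩ := hst
  rw [hs, convexHull_range_eq_exists_affineCombination] at hv₀s
  obtain ⟨s', w, hw0, hw1, hwv⟩ := hv₀s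
  rw [Finset.affineCombination_eq_linear_combination _ _ _ hw1] at hwv
  refine ⟨fun j => if j ∈ s' then w j else 0, fun j => ?_, ?_, fun i => ?_⟩
  · dsimp only
    split
    · exact hw0 _ ‹_›
    · exact le_refl 0
  · simp only [Finset.sum_ite_mem, Finset.univ_inter]
    exact hw1
  · have e1 : ∑ j, (if j ∈ s' then w j else 0) * A i j = ∑ j ∈ s', w j * A i j := by
      simp only [ite_mul, zero_mul, Finset.sum_ite_mem, Finset.univ_inter]
    have e2 : ∑ j ∈ s', w j * A i j = v₀ i := by
      rw [← hwv, Finset.sum_apply]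
      exact Finset.sum_congr rfl fun j _ => rfl
    dsimp only
    rw [e1, e2]
    exact hv₀t i
/-- The ℓ_p ball of radius δ in ℝ^d. -/
def Bp (d : ℕ) (p δ : ℝ) : Set (Fin d → ℝ) := {z | (∑ i, |z i| ^ p) ^ (1 / p) ≤ δ}

/-- robust one-vs-all boosting. -/
theorem robust_ova_boosting
    (d k m : ℕ) (hm : 1 ≤ m) (p δ : ℝ) (hp : 1 ≤ p) (hδ : 0 ≤ δ)
    (ι : Type) [Fintype ι] [Nonempty ι]
    (h : ι → (Fin d → ℝ) → Fin k)
    (x : Fin m → Fin d → ℝ) (ylab : Fin m → Fin k)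
    (γ : ℝ) (hγ : 0 < γ)
    (hweak : ∀ D : Fin m → ℝ, (∀ i, 0 ≤ D i) → (∑ i, D i = 1) →
      ∃ j : ι,
        (∑ i, D i * (2 * (if (∃ z ∈ Bp d p δ, h j (x i + z) ≠ ylab i) then (1:ℝ) else 0) - 1)) ≤ -γ) :
    ∃ Q : ι → ℝ, (∀ j, 0 ≤ Q j) ∧ (∑ j, Q j = 1) ∧
      ∀ i : Fin m, ∀ z ∈ Bp d p δ,
        (1 + γ) / 2 ≤ ∑ j, Q j * (if h j (x i + z) = ylab i then (1:ℝ) else 0) := by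
  set A : Fin m → ι → ℝ :=
    fun i j => if (∀ z ∈ Bp d p δ, h j (x i + z) = ylab i) then 1 else 0 with hA
  have hA0 : ∀ i j, 0 ≤ A i j := by
    intro i j; simp only [hA]; split <;> norm_num
  have hkey : ∀ i j, (if (∃ z ∈ Bp d p δ, h j (x i + z) ≠ ylab i) then (1:ℝ) else 0)
      = 1 - A i j := by
    intro i j
    simp only [hA]
    by_cases hall : ∀ z ∈ Bp d p δ, h j (x i + z) = ylab i
    · rw [if_pos hall, if_neg]
      · norm_num
      · push_neg
        exact fun z hz => hall z hz
    · rw [if_neg hall, if_pos]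
      · norm_num
      · push_neg at hall
        exact hall
  have hyp : ∀ D : Fin m → ℝ, (∀ i, 0 ≤ D i) → (∑ i, D i = 1) →
      ∃ j : ι, (1 + γ) / 2 ≤ ∑ i, D i * A i j := by
    intro D hD0 hD1
    obtain ⟨j, hj⟩ := hweak D hD0 hD1
    refine ⟨j, ?_⟩
    have hre : ∀ i, D i * (2 * (if (∃ z ∈ Bp d p δ, h j (x i + z) ≠ ylab i) then (1:ℝ) else 0) - 1)
        = D i - 2 * (D i * A i j) := by
      intro i; rw [hkey i j]; ring
    rw [Finset.sum_congr rfl fun i _ => hre i, Finset.sum_sub_distrib, hD1,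
      ← Finset.mul_sum] at hj
    linarith
  obtain ⟨Q, hQ0, hQ1, hQ⟩ := minimax_aux m ι A hA0 ((1 + γ) / 2) (by linarith) hyp
  refine ⟨Q, hQ0, hQ1, fun i z hz => ?_⟩
  refine le_trans (hQ i) (Finset.sum_le_sum fun j _ => ?_)
  by_cases hall : ∀ z' ∈ Bp d p δ, h j (x i + z') = ylab i
  · simp only [hA]
    rw [if_pos hall, if_pos (hall z hz)]
  · simp only [hA]
    rw [if_neg hall, mul_zero]
    split <;> [exact mul_nonneg (hQ0 j) zero_le_one; norm_num]
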